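/- Stallings' group S, given by the presentation ⟨a, b, c, d, e | b⁻¹ab = c⁻¹ac, b⁻¹ab = d⁻¹ad, b⁻¹ab = e⁻¹ae, [c,d] = 1, [d,b] = 1, [e,c] = 1, [e,b] = 1⟩, embeds in the direct product F × (F × ℤ) × F, where F denotes a free group of rank two and ℤ an infinite cyclic group; that is, there exists an injective group homomorphism from S into F₂ × (F₂ × ℤ) × F₂. -/

import Mathlib

namespace Stallings

/-- The generators `a, b, c, d, e` of the free group of rank 5. -/
noncomputable def a : FreeGroup (Fin 5) := FreeGroup.of 0
noncomputable def b : FreeGroup (Fin 5) := FreeGroup.of 1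
noncomputable def c : FreeGroup (Fin 5) := FreeGroup.of 2
noncomputable def d : FreeGroup (Fin 5) := FreeGroup.of 3
noncomputable def e : FreeGroup (Fin 5) := FreeGroup.of 4

/-- The seven relators of Stallings' group `S`:
`b⁻¹ab(c⁻¹ac)⁻¹, b⁻¹ab(d⁻¹ad)⁻¹, b⁻¹ab(e⁻¹ae)⁻¹, [c,d], [d,b], [e,c], [e,b]`,
where `[x,y] = x⁻¹y⁻¹xy`. -/
noncomputable def stallingsRelators : Set (FreeGroup (Fin 5)) :=
  {b⁻¹ * a * b * (c⁻¹ * a * c)⁻¹, b⁻¹ * a * b * (d⁻¹ * a * d)⁻¹,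
   b⁻¹ * a * b * (e⁻¹ * a * e)⁻¹,
   c⁻¹ * d⁻¹ * c * d, d⁻¹ * b⁻¹ * d * b, e⁻¹ * c⁻¹ * e * c, e⁻¹ * b⁻¹ * e * b}

/-- Stallings' group `S`, presented as
`⟨a, b, c, d, e | b⁻¹ab = c⁻¹ac = d⁻¹ad = e⁻¹ae, [c,d] = [d,b] = [e,c] = [e,b] = 1⟩`. -/
noncomputable abbrev StallingsGroup : Type :=
  FreeGroup (Fin 5) ⧸ Subgroup.normalClosure stallingsRelators

noncomputable section Ingredients

open SemidirectProduct

/-! ### The shift action of `Multiplicative ℤ` on `FreeGroup ℤ` -/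

def shiftAut : Multiplicative ℤ →* MulAut (FreeGroup ℤ) :=
  MonoidHom.mk' (fun m => FreeGroup.freeGroupCongr (Equiv.subRight m.toAdd))
    (by
      intro m m'
      have h : Equiv.subRight ((m * m').toAdd)
          = (Equiv.subRight m'.toAdd).trans (Equiv.subRight m.toAdd) := by
        ext t; simp [Equiv.subRight, sub_sub, add_comm]
      show FreeGroup.freeGroupCongr _ = _
      rw [h, ← FreeGroup.freeGroupCongr_trans]
      rfl)

@[simp] lemma shiftAut_of (m : Multiplicative ℤ) (n : ℤ) :
    shiftAut m (FreeGroup.of n) = FreeGroup.of (n - m.toAdd) := by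
  simp [shiftAut, MonoidHom.mk'_apply, Equiv.subRight]

/-! ### The group `G = FreeGroup ℤ ⋊ (F₂ × F₂)` -/

abbrev F2 : Type := FreeGroup (Fin 2)

def x₀ : F2 := FreeGroup.of 0
def y₀ : F2 := FreeGroup.of 1

/-- Total exponent sum homomorphism on `F₂`. -/
def expSum : F2 →* Multiplicative ℤ := FreeGroup.lift fun _ => Multiplicative.ofAdd 1

@[simp] lemma expSum_x₀ : expSum x₀ = Multiplicative.ofAdd 1 := by simp [expSum, x₀]
@[simp] lemma expSum_y₀ : expSum y₀ = Multiplicative.ofAdd 1 := by simp [expSum, y₀]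

/-- Total exponent sum on `F₂ × F₂`. -/
def T : F2 × F2 →* Multiplicative ℤ :=
  (expSum.comp (MonoidHom.fst _ _)) * (expSum.comp (MonoidHom.snd _ _))

@[simp] lemma T_apply (u w : F2) : T (u, w) = expSum u * expSum w := rfl

/-- The action of `F₂ × F₂` on `FreeGroup ℤ` through the total exponent sum. -/
def phiG : F2 × F2 →* MulAut (FreeGroup ℤ) := shiftAut.comp T

abbrev G : Type := SemidirectProduct (FreeGroup ℤ) (F2 × F2) phiG

@[simp] lemma phiG_of (g : F2 × F2) (n : ℤ) :
    phiG g (FreeGroup.of n) = FreeGroup.of (n - (T g).toAdd) := by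
  simp [phiG]

/-! ### The homomorphism `FreeGroup (Fin 5) →* G` killing the relators -/

def genImage : Fin 5 → G :=
  ![SemidirectProduct.inl (FreeGroup.of (0 : ℤ)),
    SemidirectProduct.inr (x₀, 1),
    SemidirectProduct.inr (y₀, 1),
    SemidirectProduct.inr (1, x₀),
    SemidirectProduct.inr (1, y₀)]

def bigF : FreeGroup (Fin 5) →* G := FreeGroup.lift genImage

lemma conj_inr_inl (g : F2 × F2) (k : FreeGroup ℤ) :
    (SemidirectProduct.inr g)⁻¹ * SemidirectProduct.inl k * SemidirectProduct.inr g
      = (SemidirectProduct.inl (phiG g⁻¹ k) : G) := by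
  rw [← _root_.map_inv inr g, inl_aut, inv_inv]

lemma bigF_a : bigF a = SemidirectProduct.inl (FreeGroup.of (0 : ℤ)) := by
  simp [bigF, a, genImage]
lemma bigF_b : bigF b = SemidirectProduct.inr (x₀, 1) := by
  simp [bigF, b, genImage]
lemma bigF_c : bigF c = SemidirectProduct.inr (y₀, 1) := by
  simp [bigF, c, genImage]
lemma bigF_d : bigF d = SemidirectProduct.inr (1, x₀) := by
  simp [bigF, d, genImage]
lemma bigF_e : bigF e = SemidirectProduct.inr (1, y₀) := by
  simp [bigF, e, genImage]

lemma bigF_conj_rel (g : F2 × F2) (hg : (T g).toAdd = 1) :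
    (SemidirectProduct.inr g : G)⁻¹ * SemidirectProduct.inl (FreeGroup.of (0:ℤ))
        * SemidirectProduct.inr g = SemidirectProduct.inl (FreeGroup.of (1:ℤ)) := by
  rw [conj_inr_inl]
  congr 1
  rw [phiG_of, _root_.map_inv T g, toAdd_inv, hg]
  norm_num

/-- helper for the first three relators -/
lemma conj_cancel {H : Type*} [Group H] {A B C v : H} (h1 : B⁻¹ * A * B = v)
    (h2 : C⁻¹ * A * C = v) : B⁻¹ * A * B * (C⁻¹ * (A⁻¹ * C)) = 1 := by
  have h3 : C⁻¹ * (A⁻¹ * C) = v⁻¹ := by rw [← h2]; group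
  rw [h1, h3, mul_inv_cancel]

/-- helper for the commutator relators -/
lemma inr_comm_rel (g₁ g₂ : F2 × F2) (h : g₂⁻¹ * (g₁ * g₂) = g₁) :
    (SemidirectProduct.inr g₁ : G)⁻¹ * (SemidirectProduct.inr g₂)⁻¹
      * SemidirectProduct.inr g₁ * SemidirectProduct.inr g₂ = 1 := by
  rw [← _root_.map_inv inr, ← _root_.map_inv inr, ← _root_.map_mul, ← _root_.map_mul,
    ← _root_.map_mul]
  rw [show g₁⁻¹ * g₂⁻¹ * g₁ * g₂ = 1 from by
    calc g₁⁻¹ * g₂⁻¹ * g₁ * g₂ = g₁⁻¹ * (g₂⁻¹ * (g₁ * g₂)) := by group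
      _ = 1 := by rw [h]; group]
  exact map_one _

lemma bigF_relators : ∀ r ∈ stallingsRelators, bigF r = 1 := by
  have hb := bigF_conj_rel (x₀, (1:F2)) (by simp)
  have hc := bigF_conj_rel (y₀, (1:F2)) (by simp)
  have hd := bigF_conj_rel ((1:F2), x₀) (by simp)
  have he := bigF_conj_rel ((1:F2), y₀) (by simp)
  intro r hr
  rcases hr with h | h | h | h | h | h | h <;> subst h <;>
    simp only [_root_.map_mul, _root_.map_inv, bigF_a, bigF_b, bigF_c, bigF_d, bigF_e, mul_inv_rev,
      inv_inv]
  · exact conj_cancel hb hc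
  · exact conj_cancel hb hd
  · exact conj_cancel hb he
  · exact inr_comm_rel _ _ (by ext1 <;> simp [x₀, y₀])
  · exact inr_comm_rel _ _ (by ext1 <;> simp [x₀, y₀])
  · exact inr_comm_rel _ _ (by ext1 <;> simp [x₀, y₀])
  · exact inr_comm_rel _ _ (by ext1 <;> simp [x₀, y₀])

/-- The homomorphism `StallingsGroup →* G`. -/
def Phi : StallingsGroup →* G :=
  QuotientGroup.lift _ bigF
    (fun r hr => Subgroup.normalClosure_le_normal
      (fun s hs => MonoidHom.mem_ker.2 (bigF_relators s hs)) hr)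

@[simp] lemma Phi_mk (w : FreeGroup (Fin 5)) :
    Phi (QuotientGroup.mk' _ w) = bigF w := rfl

end Ingredients

noncomputable section Sside

open SemidirectProduct

/-! ### Consequences of the relations inside `StallingsGroup` -/

def pr : FreeGroup (Fin 5) →* StallingsGroup :=
  QuotientGroup.mk' (Subgroup.normalClosure stallingsRelators)

def A : StallingsGroup := pr a
def B : StallingsGroup := pr b
def C : StallingsGroup := pr c
def D : StallingsGroup := pr d
def E : StallingsGroup := pr e

lemma rel_eq_one {r : FreeGroup (Fin 5)} (hr : r ∈ stallingsRelators) : pr r = 1 :=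
  (QuotientGroup.eq_one_iff r).2 (Subgroup.subset_normalClosure hr)

lemma conj_rel_eq {u v w : FreeGroup (Fin 5)}
    (h : pr (u⁻¹ * w * u * (v⁻¹ * w * v)⁻¹) = 1) :
    (pr u)⁻¹ * pr w * pr u = (pr v)⁻¹ * pr w * pr v := by
  have h1 : (pr u)⁻¹ * pr w * pr u * ((pr v)⁻¹ * pr w * pr v)⁻¹ = 1 := by
    simpa [mul_assoc] using h
  exact mul_inv_eq_one.1 h1

lemma eqBC : B⁻¹ * A * B = C⁻¹ * A * C :=
  conj_rel_eq (rel_eq_one (show b⁻¹ * a * b * (c⁻¹ * a * c)⁻¹ ∈ stallingsRelators from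
    by left; rfl))

lemma eqBD : B⁻¹ * A * B = D⁻¹ * A * D :=
  conj_rel_eq (rel_eq_one (show b⁻¹ * a * b * (d⁻¹ * a * d)⁻¹ ∈ stallingsRelators from
    by right; left; rfl))

lemma eqBE : B⁻¹ * A * B = E⁻¹ * A * E :=
  conj_rel_eq (rel_eq_one (show b⁻¹ * a * b * (e⁻¹ * a * e)⁻¹ ∈ stallingsRelators from
    by right; right; left; rfl))

lemma comm_of_rel {u v : FreeGroup (Fin 5)} (h : pr (u⁻¹ * v⁻¹ * u * v) = 1) :
    Commute (pr u) (pr v) := by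
  have h1 : (pr u)⁻¹ * (pr v)⁻¹ * pr u * pr v = 1 := by simpa [mul_assoc] using h
  have h2 : pr v * pr u * ((pr u)⁻¹ * (pr v)⁻¹ * pr u * pr v) = pr v * pr u := by
    rw [h1, mul_one]
  have : pr u * pr v = pr v * pr u := by
    calc pr u * pr v = pr v * pr u * ((pr u)⁻¹ * (pr v)⁻¹ * pr u * pr v) := by group
      _ = pr v * pr u := h2
  exact this

lemma hCD : Commute C D :=
  comm_of_rel (rel_eq_one (show c⁻¹ * d⁻¹ * c * d ∈ stallingsRelators from
    by right; right; right; left; rfl))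

lemma hDB : Commute D B :=
  comm_of_rel (rel_eq_one (show d⁻¹ * b⁻¹ * d * b ∈ stallingsRelators from
    by right; right; right; right; left; rfl))

lemma hEC : Commute E C :=
  comm_of_rel (rel_eq_one (show e⁻¹ * c⁻¹ * e * c ∈ stallingsRelators from
    by right; right; right; right; right; left; rfl))

lemma hEB : Commute E B :=
  comm_of_rel (rel_eq_one (show e⁻¹ * b⁻¹ * e * b ∈ stallingsRelators from
    by right; right; right; right; right; right; rfl))

/-- `A` commutes with `B * X⁻¹` whenever `B⁻¹AB = X⁻¹AX`. -/
lemma commA_of_eq {X : StallingsGroup} (h : B⁻¹ * A * B = X⁻¹ * A * X) :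
    Commute A (B * X⁻¹) := by
  show A * (B * X⁻¹) = (B * X⁻¹) * A
  calc A * (B * X⁻¹) = B * (B⁻¹ * A * B) * X⁻¹ := by group
    _ = B * (X⁻¹ * A * X) * X⁻¹ := by rw [h]
    _ = (B * X⁻¹) * A := by group

lemma commA_BD : Commute A (B * D⁻¹) := commA_of_eq eqBD
lemma commA_BE : Commute A (B * E⁻¹) := commA_of_eq eqBE
lemma commA_BC : Commute A (B * C⁻¹) := commA_of_eq eqBC

lemma commA_DinvB : Commute A (D⁻¹ * B) := by
  have h : B * D⁻¹ = D⁻¹ * B := (hDB.symm.inv_right).eq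
  rw [← h]; exact commA_BD

lemma commA_EinvB : Commute A (E⁻¹ * B) := by
  have h : B * E⁻¹ = E⁻¹ * B := (hEB.symm.inv_right).eq
  rw [← h]; exact commA_BE

lemma commA_CinvB : Commute A (C⁻¹ * B) := by
  have hid : (B * D⁻¹)⁻¹ * (B * C⁻¹) * (B * D⁻¹) = C⁻¹ * B := by
    calc (B * D⁻¹)⁻¹ * (B * C⁻¹) * (B * D⁻¹) = (D * C⁻¹) * (B * D⁻¹) := by group
      _ = (C⁻¹ * D) * (D⁻¹ * B) := by
          rw [(hCD.symm.inv_right).eq, (hDB.symm.inv_right).eq]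
      _ = C⁻¹ * B := by group
  rw [← hid]
  exact (commA_BD.inv_right.mul_right commA_BC).mul_right commA_BD

/-- conjugation formula: if `A` commutes with `X⁻¹ * B` then `X*A*X⁻¹ = B*A*B⁻¹`. -/
lemma conj_eq_of_comm {X : StallingsGroup} (h : Commute A (X⁻¹ * B)) :
    X * A * X⁻¹ = B * A * B⁻¹ := by
  have h1 : A * (X⁻¹ * B) = (X⁻¹ * B) * A := h.eq
  calc X * A * X⁻¹ = X * (A * (X⁻¹ * B)) * B⁻¹ := by group
    _ = X * ((X⁻¹ * B) * A) * B⁻¹ := by rw [h1]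
    _ = B * A * B⁻¹ := by group

lemma conjD : D * A * D⁻¹ = B * A * B⁻¹ := conj_eq_of_comm commA_DinvB
lemma conjE : E * A * E⁻¹ = B * A * B⁻¹ := conj_eq_of_comm commA_EinvB
lemma conjC : C * A * C⁻¹ = B * A * B⁻¹ := conj_eq_of_comm commA_CinvB

/-! ### The elements `alph n = B⁻ⁿ A Bⁿ` and conjugation by generators -/

def alph (n : ℤ) : StallingsGroup := B ^ (-n) * A * B ^ n

lemma alph_eq_D (n : ℤ) : alph n = D ^ (-n) * A * D ^ n := by
  have hmz : (B * D⁻¹) ^ n = B ^ n * (D⁻¹) ^ n := hDB.symm.inv_right.mul_zpow n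
  have hw : Commute A ((B * D⁻¹) ^ n) := commA_BD.zpow_right n
  show B ^ (-n) * A * B ^ n = D ^ (-n) * A * D ^ n
  calc B ^ (-n) * A * B ^ n
      = B ^ (-n) * (A * (B * D⁻¹) ^ n) * ((B * D⁻¹) ^ n)⁻¹ * B ^ n := by group
    _ = B ^ (-n) * ((B * D⁻¹) ^ n * A) * ((B * D⁻¹) ^ n)⁻¹ * B ^ n := by rw [hw.eq]
    _ = B ^ (-n) * (B ^ n * (D⁻¹) ^ n * A) * (B ^ n * (D⁻¹) ^ n)⁻¹ * B ^ n := by rw [hmz]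
    _ = D ^ (-n) * A * D ^ n := by group

lemma genB_conj (n : ℤ) : B * alph n * B⁻¹ = alph (n - 1) := by
  show B * (B ^ (-n) * A * B ^ n) * B⁻¹ = B ^ (-(n-1)) * A * B ^ (n-1)
  group

lemma genD_conj (n : ℤ) : D * alph n * D⁻¹ = alph (n - 1) := by
  have h1 : D * B ^ (-n) = B ^ (-n) * D := (hDB.zpow_right (-n)).eq
  have h2 : B ^ n * D⁻¹ = D⁻¹ * B ^ n := ((hDB.symm.zpow_left n).inv_right).eq
  show D * (B ^ (-n) * A * B ^ n) * D⁻¹ = B ^ (-(n-1)) * A * B ^ (n-1)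
  calc D * (B ^ (-n) * A * B ^ n) * D⁻¹
      = (D * B ^ (-n)) * A * (B ^ n * D⁻¹) := by group
    _ = (B ^ (-n) * D) * A * (D⁻¹ * B ^ n) := by rw [h1, h2]
    _ = B ^ (-n) * (D * A * D⁻¹) * B ^ n := by group
    _ = B ^ (-n) * (B * A * B⁻¹) * B ^ n := by rw [conjD]
    _ = B ^ (-(n-1)) * A * B ^ (n-1) := by group

lemma genE_conj (n : ℤ) : E * alph n * E⁻¹ = alph (n - 1) := by
  have h1 : E * B ^ (-n) = B ^ (-n) * E := (hEB.zpow_right (-n)).eq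
  have h2 : B ^ n * E⁻¹ = E⁻¹ * B ^ n := ((hEB.symm.zpow_left n).inv_right).eq
  show E * (B ^ (-n) * A * B ^ n) * E⁻¹ = B ^ (-(n-1)) * A * B ^ (n-1)
  calc E * (B ^ (-n) * A * B ^ n) * E⁻¹
      = (E * B ^ (-n)) * A * (B ^ n * E⁻¹) := by group
    _ = (B ^ (-n) * E) * A * (E⁻¹ * B ^ n) := by rw [h1, h2]
    _ = B ^ (-n) * (E * A * E⁻¹) * B ^ n := by group
    _ = B ^ (-n) * (B * A * B⁻¹) * B ^ n := by rw [conjE]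
    _ = B ^ (-(n-1)) * A * B ^ (n-1) := by group

lemma genC_conj (n : ℤ) : C * alph n * C⁻¹ = alph (n - 1) := by
  have h1 : C * D ^ (-n) = D ^ (-n) * C := (hCD.zpow_right (-n)).eq
  have h2 : D ^ n * C⁻¹ = C⁻¹ * D ^ n := ((hCD.symm.zpow_left n).inv_right).eq
  rw [alph_eq_D, alph_eq_D]
  calc C * (D ^ (-n) * A * D ^ n) * C⁻¹
      = (C * D ^ (-n)) * A * (D ^ n * C⁻¹) := by group
    _ = (D ^ (-n) * C) * A * (C⁻¹ * D ^ n) := by rw [h1, h2]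
    _ = D ^ (-n) * (C * A * C⁻¹) * D ^ n := by group
    _ = D ^ (-n) * (B * A * B⁻¹) * D ^ n := by rw [conjC]
    _ = D ^ (-n) * (D * A * D⁻¹) * D ^ n := by rw [← conjD]
    _ = D ^ (-(n-1)) * A * D ^ (n-1) := by group

end Sside

noncomputable section Psi

open SemidirectProduct

/-! ### The homomorphism `G →* StallingsGroup` -/

def liftBC : F2 →* StallingsGroup := FreeGroup.lift ![B, C]
def liftDE : F2 →* StallingsGroup := FreeGroup.lift ![D, E]

@[simp] lemma liftBC_x₀ : liftBC x₀ = B := by simp [liftBC, x₀]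
@[simp] lemma liftBC_y₀ : liftBC y₀ = C := by simp [liftBC, y₀]
@[simp] lemma liftDE_x₀ : liftDE x₀ = D := by simp [liftDE, x₀]
@[simp] lemma liftDE_y₀ : liftDE y₀ = E := by simp [liftDE, y₀]

lemma liftBC_comm_DE : ∀ (u w : F2), Commute (liftBC u) (liftDE w) := by
  have key : ∀ u : F2, Commute (liftBC u) D ∧ Commute (liftBC u) E := by
    intro u
    induction u using FreeGroup.induction_on with
    | C1 => simp [Commute.one_left]
    | of i =>
        fin_cases i
        · exact ⟨by simpa [liftBC] using hDB.symm, by simpa [liftBC] using hEB.symm⟩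
        · exact ⟨by simpa [liftBC] using hCD, by simpa [liftBC] using hEC.symm⟩
    | inv_of i h => exact ⟨by rw [_root_.map_inv]; exact h.1.inv_left,
        by rw [_root_.map_inv]; exact h.2.inv_left⟩
    | mul u v hu hv => exact ⟨by simpa using hu.1.mul_left hv.1,
        by simpa using hu.2.mul_left hv.2⟩
  intro u w
  induction w using FreeGroup.induction_on with
  | C1 => simp [Commute.one_right]
  | of i =>
      fin_cases i
      · simpa [liftDE] using (key u).1
      · simpa [liftDE] using (key u).2
  | inv_of i h => rw [_root_.map_inv]; exact h.inv_right
  | mul w v hw hv => exact by simpa using hw.mul_right hv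

/-- The homomorphism `F₂ × F₂ →* StallingsGroup` sending the generators to `B, C, D, E`. -/
def f₂S : F2 × F2 →* StallingsGroup := liftBC.noncommCoprod liftDE liftBC_comm_DE

@[simp] lemma f₂S_apply (u w : F2) : f₂S (u, w) = liftBC u * liftDE w := rfl

/-- The homomorphism `FreeGroup ℤ →* StallingsGroup` sending `of n` to `alph n`. -/
def psi1 : FreeGroup ℤ →* StallingsGroup := FreeGroup.lift alph

@[simp] lemma psi1_of (n : ℤ) : psi1 (FreeGroup.of n) = alph n := by simp [psi1]

/-- The key conjugation property. -/
lemma f₂S_conj_alph : ∀ (g : F2 × F2) (n : ℤ),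
    f₂S g * alph n * (f₂S g)⁻¹ = alph (n - (T g).toAdd) := by
  -- the property is multiplicative and closed under inverses
  set P : F2 × F2 → Prop := fun g => ∀ n : ℤ,
    f₂S g * alph n * (f₂S g)⁻¹ = alph (n - (T g).toAdd) with hP
  have hone : P 1 := by intro n; simp
  have hmul : ∀ g g', P g → P g' → P (g * g') := by
    intro g g' hg hg' n
    have harg : n - (T g').toAdd - (T g).toAdd = n - (T (g * g')).toAdd := by
      rw [_root_.map_mul, toAdd_mul]; ring
    calc f₂S (g * g') * alph n * (f₂S (g * g'))⁻¹
        = f₂S g * (f₂S g' * alph n * (f₂S g')⁻¹) * (f₂S g)⁻¹ := by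
          rw [_root_.map_mul]; group
      _ = f₂S g * alph (n - (T g').toAdd) * (f₂S g)⁻¹ := by rw [hg' n]
      _ = alph (n - (T g').toAdd - (T g).toAdd) := hg _
      _ = alph (n - (T (g * g')).toAdd) := by rw [harg]
  have hinv : ∀ g, P g → P g⁻¹ := by
    intro g hg n
    have harg : n - (T g⁻¹).toAdd = n + (T g).toAdd := by
      rw [_root_.map_inv, toAdd_inv]; ring
    have h := hg (n + (T g).toAdd)
    have h2 : alph (n + (T g).toAdd - (T g).toAdd) = alph n := by congr 1; ring
    rw [h2] at h
    rw [harg, _root_.map_inv, ← h]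
    group
  have Px1 : P (x₀, 1) := by
    intro n
    have h1 : f₂S (x₀, 1) = B := by simp
    have h2 : (T (x₀, 1)).toAdd = 1 := by simp
    rw [h1, h2]; exact genB_conj n
  have Py1 : P (y₀, 1) := by
    intro n
    have h1 : f₂S (y₀, 1) = C := by simp
    have h2 : (T (y₀, 1)).toAdd = 1 := by simp
    rw [h1, h2]; exact genC_conj n
  have P1x : P (1, x₀) := by
    intro n
    have h1 : f₂S (1, x₀) = D := by simp
    have h2 : (T (1, x₀)).toAdd = 1 := by simp
    rw [h1, h2]; exact genD_conj n
  have P1y : P (1, y₀) := by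
    intro n
    have h1 : f₂S (1, y₀) = E := by simp
    have h2 : (T (1, y₀)).toAdd = 1 := by simp
    rw [h1, h2]; exact genE_conj n
  have hleft : ∀ u : F2, P (u, 1) := by
    intro u
    induction u using FreeGroup.induction_on with
    | C1 => exact hone
    | of i =>
        fin_cases i
        · exact Px1
        · exact Py1
    | inv_of i h => exact by simpa using hinv _ h
    | mul u v hu hv => exact by simpa using hmul _ _ hu hv
  have hright : ∀ w : F2, P (1, w) := by
    intro w
    induction w using FreeGroup.induction_on with
    | C1 => exact hone
    | of i =>
        fin_cases i
        · exact P1x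
        · exact P1y
    | inv_of i h => exact by simpa using hinv _ h
    | mul u v hu hv => exact by simpa using hmul _ _ hu hv
  intro g
  obtain ⟨u, w⟩ := g
  have : ((u, w) : F2 × F2) = (u, 1) * (1, w) := by simp
  rw [this]
  exact hmul _ _ (hleft u) (hright w)

/-- The homomorphism `G →* StallingsGroup`. -/
def Psi : G →* StallingsGroup :=
  SemidirectProduct.lift psi1 f₂S
    (by
      intro g
      apply FreeGroup.ext_hom
      intro n
      simp only [MonoidHom.comp_apply, MulEquiv.coe_toMonoidHom, MulAut.conj_apply, phiG_of,
        psi1_of]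
      exact (f₂S_conj_alph g n).symm)

@[simp] lemma Psi_inl (k : FreeGroup ℤ) : Psi (SemidirectProduct.inl k) = psi1 k := by
  simp [Psi]

@[simp] lemma Psi_inr (g : F2 × F2) : Psi (SemidirectProduct.inr g) = f₂S g := by
  simp [Psi]

/-- `Psi` is a left inverse of `Phi`. -/
lemma Psi_Phi (s : StallingsGroup) : Psi (Phi s) = s := by
  induction s using QuotientGroup.induction_on with
  | H w =>
    have hcomp : (Psi.comp bigF) = pr := by
      apply FreeGroup.ext_hom
      intro i
      fin_cases i
      · show Psi (bigF a) = pr a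
        rw [bigF_a, Psi_inl, psi1_of]
        show alph 0 = A
        simp [alph]
      · show Psi (bigF b) = pr b
        rw [bigF_b, Psi_inr]
        have h : f₂S (x₀, 1) = B := by simp
        rw [h]
        rfl
      · show Psi (bigF c) = pr c
        rw [bigF_c, Psi_inr]
        have h : f₂S (y₀, 1) = C := by simp
        rw [h]
        rfl
      · show Psi (bigF d) = pr d
        rw [bigF_d, Psi_inr]
        have h : f₂S (1, x₀) = D := by simp
        rw [h]
        rfl
      · show Psi (bigF e) = pr e
        rw [bigF_e, Psi_inr]
        have h : f₂S (1, y₀) = E := by simp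
        rw [h]
        rfl
    have : Psi (Phi (QuotientGroup.mk w)) = (Psi.comp bigF) w := rfl
    rw [this, hcomp]; rfl

lemma Phi_injective : Function.Injective Phi :=
  Function.LeftInverse.injective Psi_Phi

end Psi

noncomputable section Theta

open SemidirectProduct

/-! ### Embedding `G` into `F₂ × (F₂ × ℤ) × F₂` -/

/-- The homomorphism `FreeGroup ℤ →* F₂` sending `of n` to `x₀ⁿ y₀ x₀⁻ⁿ`. -/
def jmap : FreeGroup ℤ →* F2 := FreeGroup.lift fun n => x₀ ^ n * y₀ * x₀ ^ (-n)

@[simp] lemma jmap_of (n : ℤ) : jmap (FreeGroup.of n) = x₀ ^ n * y₀ * x₀ ^ (-n) := by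
  simp [jmap]

/-- `jmap` is injective, via a retraction-like trick through `FreeGroup ℤ ⋊ Multiplicative ℤ`. -/
lemma jmap_injective : Function.Injective jmap := by
  set rho : F2 →* SemidirectProduct (FreeGroup ℤ) (Multiplicative ℤ) shiftAut :=
    FreeGroup.lift ![SemidirectProduct.inr (Multiplicative.ofAdd 1),
      SemidirectProduct.inl (FreeGroup.of (0 : ℤ))] with hrho
  have key : rho.comp jmap
      = SemidirectProduct.inl.comp
        (FreeGroup.freeGroupCongr (Equiv.neg ℤ)).toMonoidHom := by
    apply FreeGroup.ext_hom
    intro n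
    have hx : rho x₀ = SemidirectProduct.inr (Multiplicative.ofAdd 1) := by simp [hrho, x₀]
    have hy : rho y₀ = SemidirectProduct.inl (FreeGroup.of (0 : ℤ)) := by simp [hrho, y₀]
    have hzp : ∀ m : ℤ, rho (x₀ ^ m) = SemidirectProduct.inr (Multiplicative.ofAdd m) := by
      intro m
      rw [map_zpow, hx, ← map_zpow]
      congr 1
      rw [← ofAdd_zsmul]
      norm_num
    have hneg : (SemidirectProduct.inr (Multiplicative.ofAdd (-n)) :
        SemidirectProduct (FreeGroup ℤ) (Multiplicative ℤ) shiftAut)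
        = (SemidirectProduct.inr (Multiplicative.ofAdd n))⁻¹ := by
      rw [← _root_.map_inv]
      congr 1
    have hjn : rho (jmap (FreeGroup.of n)) = SemidirectProduct.inl (FreeGroup.of (-n)) := by
      rw [jmap_of, _root_.map_mul, _root_.map_mul, hzp n, hzp (-n), hy, hneg,
        ← _root_.map_inv, ← inl_aut]
      simp
    simp only [MonoidHom.comp_apply, hjn, MulEquiv.coe_toMonoidHom]
    congr 1
  have hinj : Function.Injective (rho.comp jmap) := by
    rw [key]
    exact inl_injective.comp (FreeGroup.freeGroupCongr (Equiv.neg ℤ)).injective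
  exact Function.Injective.of_comp (f := rho) hinj

/-- The target group. -/
abbrev Target : Type :=
  FreeGroup (Fin 2) × (FreeGroup (Fin 2) × Multiplicative ℤ) × FreeGroup (Fin 2)

/-- first component of `Theta` -/
def comp₁ : G →* F2 := (MonoidHom.fst F2 F2).comp SemidirectProduct.rightHom
/-- third component of `Theta` -/
def comp₃ : G →* F2 := (MonoidHom.snd F2 F2).comp SemidirectProduct.rightHom

/-- middle component of `Theta` -/
def comp₂ : G →* F2 × Multiplicative ℤ :=
  SemidirectProduct.lift (jmap.prod 1)
    (((zpowersHom F2 x₀⁻¹).comp T).prod T)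
    (by
      intro g
      apply FreeGroup.ext_hom
      intro n
      simp only [MonoidHom.comp_apply, MulEquiv.coe_toMonoidHom, MulAut.conj_apply, phiG_of,
        MonoidHom.prod_apply, jmap_of, MonoidHom.one_apply, zpowersHom_apply]
      apply Prod.ext
      · simp only [Prod.fst_mul, Prod.fst_inv]
        group
      · simp only [Prod.snd_mul, Prod.snd_inv]
        group)

@[simp] lemma comp₂_inl (k : FreeGroup ℤ) :
    comp₂ (SemidirectProduct.inl k) = (jmap k, 1) := by
  simp [comp₂]

/-- The embedding `G →* Target`. -/
def Theta : G →* Target := comp₁.prod (comp₂.prod comp₃)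

lemma Theta_injective : Function.Injective Theta := by
  rw [injective_iff_map_eq_one]
  intro p hp
  have h1 : comp₁ p = 1 := congrArg Prod.fst hp
  have h23 := congrArg Prod.snd hp
  have h2 : comp₂ p = 1 := congrArg Prod.fst h23
  have h3 : comp₃ p = 1 := congrArg Prod.snd h23
  have hr : p.right = 1 := by
    have : p.right = (comp₁ p, comp₃ p) := rfl
    rw [this, h1, h3]; rfl
  have hp' : p = SemidirectProduct.inl p.left := by
    rw [← inl_left_mul_inr_right p, hr]
    simp
  rw [hp', comp₂_inl] at h2
  have : jmap p.left = 1 := congrArg Prod.fst h2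
  have hleft : p.left = 1 := jmap_injective (by simpa using this)
  rw [hp', hleft, map_one]

end Theta

/-- Stallings' group `S` embeds in the direct product `F × (F × ℤ) × F`, where
`F` is a free group of rank two and `ℤ` is infinite cyclic. -/
theorem stallingsGroup_embeds :
    ∃ f : StallingsGroup →*
        FreeGroup (Fin 2) × (FreeGroup (Fin 2) × Multiplicative ℤ) × FreeGroup (Fin 2),
      Function.Injective f :=
  ⟨Theta.comp Phi, Theta_injective.comp Phi_injective⟩

end Stallings
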